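/- arXiv:1705.03852 — 6 statements merged into one kernel-verified Lean document; each statement's English description precedes it below -/
import Mathlib

section
/- Let ρ ∈ (0, 1/2), set α = -log(2ρ·e^{1-2ρ}) (which is positive), let t₀ > 0, let K ≥ 1 be an integer, and let d be a positive integer satisfying d ≥ (2(1+t₀)/α)·log K. If Y is a Poisson random variable with parameter ρd, then (K/d) · E[[Y − d]⁺] ≤ K^{−t₀}/√(2π), i.e. (K/d) · Σ_{k=d}^{∞} (k−d)·(ρd)^k e^{−ρd}/k! ≤ K^{−t₀}/√(2π). -/
open Real

lemma stirling_lb (d : ℕ) (hd : 0 < d) :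
    Real.sqrt π * (Real.sqrt (2*d) * ((d:ℝ)/Real.exp 1)^d) ≤ d.factorial := by
  obtain ⟨n, rfl⟩ : ∃ n, d = n + 1 := ⟨d-1, (Nat.succ_pred_eq_of_pos hd).symm⟩
  have h1 : Real.sqrt π ≤ Stirling.stirlingSeq (n+1) := by
    have := Stirling.stirlingSeq'_antitone.le_of_tendsto
      (Stirling.tendsto_stirlingSeq_sqrt_pi.comp (Filter.tendsto_add_atTop_nat 1)) n
    simpa using this
  have hB : 0 < Real.sqrt (2*((n+1:ℕ):ℝ)) * (((n+1:ℕ):ℝ)/Real.exp 1)^(n+1) := by positivity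
  rw [Stirling.stirlingSeq] at h1
  exact (le_div_iff₀ hB).mp h1

set_option maxHeartbeats 2000000 in
/-- Expected number of unmatched users bound for PCD. -/
theorem stmt_0 (ρ : ℝ) (hρ : ρ ∈ Set.Ioo (0:ℝ) (1/2))
    (t₀ : ℝ) (ht₀ : 0 < t₀)
    (K : ℕ) (hK : 1 ≤ K)
    (d : ℕ) (hd : 0 < d)
    (hdK : (d : ℝ) ≥ (2 * (1 + t₀) / (-Real.log (2 * ρ * Real.exp (1 - 2 * ρ)))) * Real.log K) :
    (K : ℝ) / d *
        ∑' k : ℕ, max ((k : ℝ) - d) 0 * (ρ * d) ^ k * Real.exp (-(ρ * d)) / (Nat.factorial k)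
      ≤ (K : ℝ) ^ (-t₀) / Real.sqrt (2 * Real.pi) := by
  obtain ⟨hρ0, hρ2⟩ := hρ
  have hd1 : (1:ℝ) ≤ d := by exact_mod_cast hd
  have hd0 : (0:ℝ) < d := by linarith
  have hK1 : (1:ℝ) ≤ K := by exact_mod_cast hK
  have hK0 : (0:ℝ) < K := by linarith
  set α : ℝ := -Real.log (2 * ρ * Real.exp (1 - 2 * ρ)) with hα_def
  clear_value α
  set L : ℝ := ρ * d with hL_def
  clear_value L
  have hL0 : 0 < L := by rw [hL_def]; positivity
  have h2L : 2 * L ≤ (d:ℝ) := by rw [hL_def]; nlinarith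
  set r : ℝ := L / (d + 1) with hr_def
  clear_value r
  have hr0 : 0 ≤ r := by rw [hr_def]; positivity
  have hrL : r * ((d:ℝ) + 1) = L := by
    rw [hr_def]; exact div_mul_cancel₀ _ (by positivity)
  have hr4 : r ≤ (d:ℝ)/4 := by nlinarith
  have hrhalf : r ≤ 1/2 := by nlinarith
  have hr1 : ‖r‖ < 1 := by
    rw [Real.norm_eq_abs, abs_of_nonneg hr0]; linarith
  have hrd : r / (1 - r)^2 ≤ (d:ℝ) := by
    have h1r : (0:ℝ) < 1 - r := by linarith
    rw [div_le_iff₀ (by positivity)]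
    nlinarith
  -- α positivity
  have harg : (0:ℝ) < 2 * ρ * Real.exp (1 - 2 * ρ) := by positivity
  have hα : 0 < α := by
    rw [hα_def, neg_pos]
    have hlt : Real.log (2 * ρ) < 2 * ρ - 1 :=
      Real.log_lt_sub_one_of_pos (by linarith) (by intro h; nlinarith)
    rw [Real.log_mul (by positivity) (Real.exp_ne_zero _), Real.log_exp]
    linarith
  -- the function
  set f : ℕ → ℝ := fun k => max ((k : ℝ) - d) 0 * L ^ k * Real.exp (-L) / (Nat.factorial k)
    with hf_def
  clear_value f
  set C : ℝ := Real.exp (-L) * L ^ d / d.factorial with hC_def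
  clear_value C
  have hC0 : 0 ≤ C := by rw [hC_def]; positivity
  -- shift the sum
  have hsupp : Function.support f ⊆ Set.range (fun j : ℕ => j + d) := by
    intro k hk
    rcases le_or_gt d k with h | h
    · exact ⟨k - d, by show k - d + d = k; omega⟩
    · exfalso; apply hk
      have hm : max ((k : ℝ) - d) 0 = 0 := by
        rw [max_eq_right]
        have : (k:ℝ) < d := by exact_mod_cast h
        linarith
      simp [hf_def, hm]
  have hshift : ∑' j : ℕ, f (j + d) = ∑' k : ℕ, f k :=
    (add_left_injective d).tsum_eq hsupp
  -- termwise bound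
  have hgs : HasSum (fun n : ℕ => (n:ℝ) * r ^ n) (r / (1 - r) ^ 2) :=
    hasSum_coe_mul_geometric_of_norm_lt_one hr1
  have hgs' : HasSum (fun n : ℕ => C * ((n:ℝ) * r ^ n)) (C * (r / (1 - r) ^ 2)) :=
    hgs.mul_left C
  have hterm : ∀ j : ℕ, f (j + d) ≤ C * ((j:ℝ) * r ^ j) := by
    intro j
    have hmax : max (((j + d : ℕ) : ℝ) - d) 0 = (j : ℝ) := by
      push_cast
      have h0 : (j:ℝ) + d - d = (j:ℝ) := by ring
      rw [h0, max_eq_left (Nat.cast_nonneg j)]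
    have hfact : ((d.factorial : ℝ) * ((d:ℝ) + 1) ^ j) ≤ ((d + j).factorial : ℝ) := by
      exact_mod_cast Nat.factorial_mul_pow_le_factorial
    have hrw : C * ((j:ℝ) * r ^ j)
        = (j:ℝ) * L ^ (j + d) * Real.exp (-L) / ((d.factorial : ℝ) * ((d:ℝ) + 1) ^ j) := by
      rw [hC_def, hr_def, div_pow, pow_add]
      have h1 : ((d:ℝ) + 1) ^ j ≠ 0 := by positivity
      have h2 : (d.factorial : ℝ) ≠ 0 := by positivity
      field_simp
    rw [hf_def, hrw]
    simp only []
    rw [hmax]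
    have hnum : 0 ≤ (j:ℝ) * L ^ (j + d) * Real.exp (-L) := by positivity
    have h3 : 0 < (d.factorial : ℝ) * ((d:ℝ) + 1) ^ j := by positivity
    have h4 : ((j + d).factorial : ℝ) = ((d + j).factorial : ℝ) := by rw [Nat.add_comm]
    rw [h4]
    exact div_le_div_of_nonneg_left hnum h3 hfact |>.trans_eq' (by ring_nf)
  have hfnonneg : ∀ j : ℕ, 0 ≤ f (j + d) := by
    intro j; rw [hf_def]
    have : (0:ℝ) ≤ max (((j+d:ℕ) : ℝ) - d) 0 := le_max_right _ _
    positivity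
  have hsum1 : Summable (fun j : ℕ => f (j + d)) :=
    Summable.of_nonneg_of_le hfnonneg hterm hgs'.summable
  have hT : ∑' k : ℕ, f k ≤ C * (r / (1 - r) ^ 2) := by
    rw [← hshift, ← hgs'.tsum_eq]
    exact Summable.tsum_le_tsum hterm hsum1 hgs'.summable
  -- Stirling bound on C
  have hstir := stirling_lb d hd
  have hx0 : (0:ℝ) < ρ * Real.exp (1 - ρ) := by positivity
  have hCb : C ≤ (ρ * Real.exp (1 - ρ))^d / (Real.sqrt π * Real.sqrt (2*d)) := by
    have h1 : C ≤ Real.exp (-L) * L ^ d /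
        (Real.sqrt π * (Real.sqrt (2*(d:ℝ)) * ((d:ℝ)/Real.exp 1)^d)) := by
      rw [hC_def]
      exact div_le_div_of_nonneg_left (by positivity) (by positivity) hstir
    refine h1.trans_eq ?_
    have e1 : Real.exp (1-ρ) ^ d = Real.exp ((d:ℝ)*(1-ρ)) := (Real.exp_nat_mul _ d).symm
    have e2 : Real.exp 1 ^ d = Real.exp (d:ℝ) := by rw [← Real.exp_nat_mul, mul_one]
    have e3 : Real.exp ((d:ℝ)*(1-ρ)) = Real.exp (-(ρ*(d:ℝ))) * Real.exp (d:ℝ) := by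
      rw [← Real.exp_add]; ring_nf
    have key : Real.exp (-L) * L ^ d = (ρ * Real.exp (1-ρ))^d * ((d:ℝ)/Real.exp 1)^d := by
      rw [show (ρ * Real.exp (1-ρ))^d = ρ^d * Real.exp ((d:ℝ)*(1-ρ)) from by rw [mul_pow, e1]]
      rw [hL_def, div_pow, e2, e3, mul_pow]
      have he : Real.exp (d:ℝ) ≠ 0 := Real.exp_ne_zero _
      field_simp
    rw [key]
    have hpd : ((d:ℝ)/Real.exp 1)^d ≠ 0 := by positivity
    have hsp : Real.sqrt π ≠ 0 := by positivity
    have hs2 : Real.sqrt (2*(d:ℝ)) ≠ 0 := by positivity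
    field_simp
  -- bound (ρ e^{1-ρ})^d by exp(-αd/2)
  have hxd : (ρ * Real.exp (1 - ρ))^d ≤ Real.exp (-(α*d/2)) := by
    have hsq : (ρ * Real.exp (1 - ρ))^2 ≤ Real.exp (-α) := by
      rw [hα_def, neg_neg, Real.exp_log harg]
      have hee : Real.exp (1-ρ) ^ 2 = Real.exp 1 * Real.exp (1 - 2*ρ) := by
        rw [sq, ← Real.exp_add, ← Real.exp_add]; ring_nf
      have he : Real.exp 1 < 2.7182818286 := Real.exp_one_lt_d9
      have hepos := Real.exp_pos (1 - 2*ρ)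
      have he0 := Real.exp_pos 1
      rw [mul_pow, hee]
      have h5 : ρ * Real.exp 1 ≤ 2 := by
        have := mul_lt_mul_of_pos_right hρ2 he0
        linarith
      have h6 := mul_le_mul_of_nonneg_right h5 (mul_pos hρ0 hepos).le
      nlinarith [h6]
    have h2 : ((ρ * Real.exp (1 - ρ))^d)^2 ≤ (Real.exp (-(α*d/2)))^2 := by
      have hE : (Real.exp (-(α*(d:ℝ)/2)))^2 = Real.exp (-(α*(d:ℝ))) := by
        rw [sq, ← Real.exp_add]; ring_nf
      rw [← pow_mul, hE]
      calc (ρ * Real.exp (1 - ρ))^(d*2) = ((ρ * Real.exp (1 - ρ))^2)^d := by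
            rw [← pow_mul, Nat.mul_comm]
        _ ≤ (Real.exp (-α))^d := pow_le_pow_left₀ (by positivity) hsq d
        _ = Real.exp (-(α*(d:ℝ))) := by rw [← Real.exp_nat_mul]; congr 1; ring
    exact (pow_le_pow_iff_left₀ (by positivity) (Real.exp_pos _).le two_ne_zero).mp h2
  -- exponent bound from hdK
  have hαd : (1 + t₀) * Real.log K ≤ α * d / 2 := by
    have hlK : 0 ≤ Real.log K := Real.log_nonneg hK1
    have h1 : 2*(1+t₀)/α * Real.log K * α ≤ (d:ℝ) * α :=
      mul_le_mul_of_nonneg_right hdK hα.le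
    have h2 : 2*(1+t₀)/α * Real.log K * α = 2*((1+t₀)*Real.log K) := by
      field_simp
    linarith [h2 ▸ h1]
  have hKe : (K:ℝ) * Real.exp (-(α*d/2)) ≤ (K:ℝ)^(-t₀) := by
    have h1 : Real.exp (-(α*(d:ℝ)/2)) ≤ Real.exp (-((1+t₀)*Real.log K)) :=
      Real.exp_le_exp.mpr (by linarith)
    have h2 : (K:ℝ) * Real.exp (-((1+t₀)*Real.log K)) = (K:ℝ)^(-t₀) := by
      have hKeq : (K:ℝ) = Real.exp (Real.log K) := (Real.exp_log hK0).symm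
      rw [Real.rpow_def_of_pos hK0]
      nth_rewrite 1 [hKeq]
      rw [← Real.exp_add]; congr 1; ring
    calc (K:ℝ) * Real.exp (-(α*(d:ℝ)/2)) ≤ (K:ℝ) * Real.exp (-((1+t₀)*Real.log K)) :=
          mul_le_mul_of_nonneg_left h1 hK0.le
      _ = _ := h2
  -- final chain
  have hsd1 : (1:ℝ) ≤ Real.sqrt d := by
    rw [show (1:ℝ) = Real.sqrt 1 from Real.sqrt_one.symm]
    exact Real.sqrt_le_sqrt hd1
  have hs2π : (0:ℝ) < Real.sqrt (2*π) := Real.sqrt_pos.mpr (by positivity)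
  calc (K:ℝ)/d * ∑' k : ℕ, f k
      ≤ (K:ℝ)/d * (C * (r/(1-r)^2)) := by
        apply mul_le_mul_of_nonneg_left hT (by positivity)
    _ ≤ (K:ℝ)/d * (((ρ*Real.exp (1-ρ))^d / (Real.sqrt π * Real.sqrt (2*d))) * d) := by
        apply mul_le_mul_of_nonneg_left ?_ (by positivity)
        apply mul_le_mul hCb hrd (by positivity)
        positivity
    _ ≤ (K:ℝ)/d * ((Real.exp (-(α*d/2)) / (Real.sqrt π * Real.sqrt (2*d))) * d) := by
        gcongr
    _ = (K:ℝ) * Real.exp (-(α*d/2)) / (Real.sqrt (2*π) * Real.sqrt d) := by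
        have hs : Real.sqrt π * Real.sqrt (2*(d:ℝ)) = Real.sqrt (2*π) * Real.sqrt d := by
          rw [← Real.sqrt_mul (by positivity), ← Real.sqrt_mul (by positivity)]
          ring_nf
        rw [hs]
        have h1 : Real.sqrt (2*π) ≠ 0 := ne_of_gt hs2π
        have h2 : Real.sqrt (d:ℝ) ≠ 0 := by positivity
        have h3 : (d:ℝ) ≠ 0 := ne_of_gt hd0
        field_simp
    _ ≤ (K:ℝ)^(-t₀)/Real.sqrt (2*π) := by
        rw [div_le_div_iff₀ (by positivity) hs2π]
        have hKt : (0:ℝ) < (K:ℝ)^(-t₀) := Real.rpow_pos_of_pos hK0 _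
        have hA : (0:ℝ) ≤ (K:ℝ)^(-t₀) * Real.sqrt (2*π) := by positivity
        have h7 := mul_le_mul_of_nonneg_left hsd1 hA
        have h8 := mul_le_mul_of_nonneg_right hKe hs2π.le
        nlinarith [h7, h8]
end

section
/- Let m ≥ 1 be an integer and γ ∈ (0,1). If Y is a Poisson random variable with parameter γm, then the expected excess over m satisfies E[[Y − m]⁺] ≤ (1/√(2π)) · m · (γ·e^{1−γ})^m, i.e. Σ_{k=m}^{∞} (k−m)·(γm)^k e^{−γm}/k! ≤ (1/√(2π)) · m · (γ e^{1−γ})^m. -/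
open Real

lemma stirling_lb_s1 (m : ℕ) (hm : 1 ≤ m) :
    Real.sqrt (2 * Real.pi) * ((m : ℝ) / Real.exp 1) ^ m ≤ (Nat.factorial m : ℝ) := by
  have hm0 : (0:ℝ) < m := by exact_mod_cast hm
  have hpos : 0 < Real.sqrt (2 * (m:ℝ)) * ((m:ℝ) / Real.exp 1) ^ m := by positivity
  have hsp : Real.sqrt Real.pi ≤ Stirling.stirlingSeq m := by
    obtain ⟨n, rfl⟩ := Nat.exists_eq_add_of_le hm
    have ht : Filter.Tendsto (Stirling.stirlingSeq ∘ Nat.succ) Filter.atTop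
        (nhds (Real.sqrt Real.pi)) :=
      Stirling.tendsto_stirlingSeq_sqrt_pi.comp (Filter.tendsto_add_atTop_nat 1)
    have := Stirling.stirlingSeq'_antitone.le_of_tendsto ht n
    simpa [Function.comp, Nat.succ_eq_add_one, Nat.add_comm] using this
  have hfac : (Nat.factorial m : ℝ)
      = Stirling.stirlingSeq m * (Real.sqrt (2 * (m:ℝ)) * ((m:ℝ) / Real.exp 1) ^ m) := by
    rw [Stirling.stirlingSeq, div_mul_cancel₀]
    exact ne_of_gt hpos
  rw [hfac]
  have h2m : Real.sqrt (2 * Real.pi) ≤ Stirling.stirlingSeq m * Real.sqrt (2 * (m:ℝ)) := by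
    have h1 : Real.sqrt (2 * Real.pi) = Real.sqrt Real.pi * Real.sqrt 2 := by
      rw [← Real.sqrt_mul (by positivity)]; ring_nf
    have h2 : Real.sqrt 2 ≤ Real.sqrt (2 * (m:ℝ)) := by
      apply Real.sqrt_le_sqrt
      have hm1 : (1:ℝ) ≤ m := by exact_mod_cast hm
      nlinarith
    calc Real.sqrt (2 * Real.pi) = Real.sqrt Real.pi * Real.sqrt 2 := h1
      _ ≤ Stirling.stirlingSeq m * Real.sqrt (2 * (m:ℝ)) := by
          apply mul_le_mul hsp h2 (by positivity)
          exact le_trans (Real.sqrt_nonneg _) hsp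
  calc Real.sqrt (2 * Real.pi) * ((m:ℝ) / Real.exp 1) ^ m
      ≤ (Stirling.stirlingSeq m * Real.sqrt (2 * (m:ℝ))) * ((m:ℝ) / Real.exp 1) ^ m := by
        apply mul_le_mul_of_nonneg_right h2m (by positivity)
    _ = Stirling.stirlingSeq m * (Real.sqrt (2 * (m:ℝ)) * ((m:ℝ) / Real.exp 1) ^ m) := by ring

/-- Expected excess of a Poisson(γm) variable over m. -/
theorem stmt_1 (m : ℕ) (hm : 1 ≤ m) (γ : ℝ) (hγ : γ ∈ Set.Ioo (0:ℝ) 1) :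
    ∑' k : ℕ, max ((k : ℝ) - m) 0 * (γ * m) ^ k * Real.exp (-(γ * m)) / (Nat.factorial k)
      ≤ (1 / Real.sqrt (2 * Real.pi)) * m * (γ * Real.exp (1 - γ)) ^ m := by
  obtain ⟨hγ0, hγ1⟩ := hγ
  have hm0 : (0:ℝ) < m := by exact_mod_cast hm
  set L : ℝ := γ * m with hLdef
  have hL0 : 0 < L := mul_pos hγ0 hm0
  set p : ℕ → ℝ := fun k => L ^ k / (Nat.factorial k) with hpdef
  have hpsum : Summable p := Real.summable_pow_div_factorial L
  have hpnn : ∀ k, 0 ≤ p k := fun k => by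
    simp only [hpdef]; positivity
  -- summability of k * p k
  have hkey : (fun n : ℕ => ((n:ℝ)+1) * p (n+1)) = fun n => L * p n := by
    funext n
    simp only [hpdef, Nat.factorial_succ, pow_succ]
    push_cast
    have h1 : ((n:ℝ)+1) ≠ 0 := by positivity
    have h2 : (Nat.factorial n : ℝ) ≠ 0 := by
      exact_mod_cast (Nat.factorial_ne_zero n)
    field_simp
  have hksum : Summable (fun k : ℕ => (k:ℝ) * p k) := by
    apply (summable_nat_add_iff 1).mp
    have : (fun n : ℕ => ((n+1 : ℕ):ℝ) * p (n+1)) = fun n => L * p n := by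
      push_cast; exact hkey
    rw [this]
    exact hpsum.mul_left L
  set F : ℕ → ℝ :=
    fun k => max ((k : ℝ) - m) 0 * (γ * m) ^ k * Real.exp (-(γ * m)) / (Nat.factorial k)
    with hFdef
  have hFeq : ∀ k, F k = max ((k : ℝ) - m) 0 * Real.exp (-L) * p k := by
    intro k
    simp only [hFdef, hpdef, ← hLdef]
    ring
  have hFnn : ∀ k, 0 ≤ F k := by
    intro k; rw [hFeq]
    have := hpnn k
    positivity
  have hFle : ∀ k, F k ≤ (k:ℝ) * p k * Real.exp (-L) := by
    intro k; rw [hFeq]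
    have h1 : max ((k : ℝ) - m) 0 ≤ (k:ℝ) := by
      apply max_le _ (Nat.cast_nonneg k)
      linarith
    have := hpnn k
    have h2 : 0 < Real.exp (-L) := Real.exp_pos _
    nlinarith [mul_le_mul_of_nonneg_right h1 (hpnn k)]
  have hFsum : Summable F :=
    Summable.of_nonneg_of_le hFnn hFle ((hksum.mul_right _))
  -- drop the first m terms (they vanish)
  have hzero : ∀ k < m, F k = 0 := by
    intro k hk
    rw [hFeq]
    have : (k:ℝ) - m ≤ 0 := by
      have : (k:ℝ) ≤ m := by exact_mod_cast hk.le
      linarith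
    rw [max_eq_right this]
    ring
  have hsplit : ∑' k, F k = ∑' i : ℕ, F (i + m) := by
    rw [← Summable.sum_add_tsum_nat_add m hFsum]
    rw [Finset.sum_eq_zero (fun i hi => hzero i (Finset.mem_range.mp hi)), zero_add]
  have hFm : F m = 0 := by
    rw [hFeq]; simp
  have hsum_shift : Summable (fun i : ℕ => F (i + m)) := (summable_nat_add_iff m).mpr hFsum
  have hsplit2 : ∑' i : ℕ, F (i + m) = ∑' i : ℕ, F (i + 1 + m) := by
    rw [Summable.tsum_eq_zero_add hsum_shift]
    simp only [Nat.zero_add, hFm, zero_add]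
  -- telescoping form
  have hterm : ∀ i : ℕ, F (i + 1 + m)
      = Real.exp (-L) * (L * p (i + m)) - Real.exp (-L) * ((m:ℝ) * p (i + m + 1)) := by
    intro i
    rw [hFeq]
    have hmax : max (((i + 1 + m : ℕ):ℝ) - m) 0 = (i:ℝ) + 1 := by
      have hc : ((i + 1 + m : ℕ):ℝ) - m = (i:ℝ) + 1 := by push_cast; ring
      rw [hc, max_eq_left (by positivity)]
    rw [hmax]
    simp only [hpdef]
    have hfac : (Nat.factorial (i + 1 + m) : ℝ) = ((i:ℝ) + 1 + m) * Nat.factorial (i + m) := by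
      have : i + 1 + m = (i + m) + 1 := by ring
      rw [this, Nat.factorial_succ]
      push_cast; ring
    have hfac2 : i + m + 1 = i + 1 + m := by ring
    rw [hfac2, hfac]
    have h1 : ((i:ℝ) + 1 + m) ≠ 0 := by positivity
    have h2 : (Nat.factorial (i + m) : ℝ) ≠ 0 := by
      exact_mod_cast (Nat.factorial_ne_zero (i+m))
    have hpow : L ^ (i + 1 + m) = L * L ^ (i + m) := by
      rw [show i + 1 + m = (i + m) + 1 by ring, pow_succ]; ring
    rw [hpow]
    field_simp
    ring
  -- summabilities for the split
  have hA : Summable (fun i : ℕ => p (i + m)) := (summable_nat_add_iff m).mpr hpsum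
  have hB : Summable (fun i : ℕ => p (i + m + 1)) := by
    have := (summable_nat_add_iff (m+1)).mpr hpsum
    simpa [Nat.add_assoc] using this
  set A : ℝ := ∑' i : ℕ, p (i + m) with hAdef
  set B : ℝ := ∑' i : ℕ, p (i + m + 1) with hBdef
  have hval : ∑' i : ℕ, F (i + 1 + m)
      = Real.exp (-L) * (L * A) - Real.exp (-L) * ((m:ℝ) * B) := by
    calc ∑' i : ℕ, F (i + 1 + m)
        = ∑' i : ℕ, (Real.exp (-L) * (L * p (i + m)) - Real.exp (-L) * ((m:ℝ) * p (i + m + 1))) := by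
          exact tsum_congr hterm
      _ = (∑' i : ℕ, Real.exp (-L) * (L * p (i + m)))
            - ∑' i : ℕ, Real.exp (-L) * ((m:ℝ) * p (i + m + 1)) := by
          exact Summable.tsum_sub ((hA.mul_left L).mul_left _) ((hB.mul_left (m:ℝ)).mul_left _)
      _ = Real.exp (-L) * (L * A) - Real.exp (-L) * ((m:ℝ) * B) := by
          rw [hAdef, hBdef, ← tsum_mul_left, ← tsum_mul_left, ← tsum_mul_left, ← tsum_mul_left]
  -- A = p m + B
  have hAB : A = p m + B := by
    rw [hAdef, Summable.tsum_eq_zero_add hA]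
    congr 1
    · simp
    · rw [hBdef]
      apply tsum_congr
      intro i
      congr 1
      ring
  have hBnn : 0 ≤ B := tsum_nonneg (fun i => hpnn _)
  -- main bound
  have hbound : ∑' k, F k ≤ Real.exp (-L) * (L * p m) := by
    rw [hsplit, hsplit2, hval, hAB]
    have hLm : L ≤ (m:ℝ) := by
      rw [hLdef]
      nlinarith
    have hexp : 0 < Real.exp (-L) := Real.exp_pos _
    nlinarith [mul_nonneg (mul_nonneg hexp.le (sub_nonneg.2 hLm)) hBnn]
  refine hbound.trans ?_
  -- final: exp(-L) * L * p m ≤ RHS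
  have hst := stirling_lb_s1 m hm
  have hD : (0:ℝ) < Real.sqrt (2 * Real.pi) * ((m:ℝ) / Real.exp 1) ^ m := by
    have : (0:ℝ) < Real.pi := Real.pi_pos
    positivity
  have hstep1 : Real.exp (-L) * (L * p m) ≤ Real.exp (-L) * ((m:ℝ) * p m) := by
    have hLm : L ≤ (m:ℝ) := by rw [hLdef]; nlinarith
    have hpm := hpnn m
    have hexp : 0 < Real.exp (-L) := Real.exp_pos _
    nlinarith [mul_nonneg (mul_nonneg hexp.le (sub_nonneg.2 hLm)) hpm]
  refine hstep1.trans ?_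
  have hstep2 : p m ≤ L ^ m / (Real.sqrt (2 * Real.pi) * ((m:ℝ) / Real.exp 1) ^ m) := by
    simp only [hpdef]
    apply div_le_div_of_nonneg_left (by positivity) hD hst
  have hfinal : Real.exp (-L) * ((m:ℝ) * (L ^ m / (Real.sqrt (2 * Real.pi) * ((m:ℝ) / Real.exp 1) ^ m)))
      = (1 / Real.sqrt (2 * Real.pi)) * m * (γ * Real.exp (1 - γ)) ^ m := by
    have h2π : (0:ℝ) < Real.sqrt (2 * Real.pi) := Real.sqrt_pos.2 (by positivity)
    have hexp1 : (0:ℝ) < Real.exp 1 := Real.exp_pos _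
    have hem : (γ * Real.exp (1 - γ)) ^ m = γ ^ m * (Real.exp 1 ^ m * Real.exp (-L)) := by
      rw [mul_pow]
      congr 1
      rw [← Real.exp_nat_mul, ← Real.exp_nat_mul, ← Real.exp_add]
      congr 1
      rw [hLdef]
      ring
    rw [hem, hLdef, mul_pow, div_pow]
    field_simp
  calc Real.exp (-L) * ((m:ℝ) * p m)
      ≤ Real.exp (-L) * ((m:ℝ) * (L ^ m / (Real.sqrt (2 * Real.pi) * ((m:ℝ) / Real.exp 1) ^ m))) := by
        apply mul_le_mul_of_nonneg_left _ (Real.exp_pos _).le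
        exact mul_le_mul_of_nonneg_left hstep2 (by positivity)
    _ = (1 / Real.sqrt (2 * Real.pi)) * m * (γ * Real.exp (1 - γ)) ^ m := hfinal
end

section
/- Let β ∈ [0, 1), let N ≥ 1 be an integer, define A_N = Σ_{n=1}^{N} n^{−β} and the Zipf popularities p_n = n^{−β}/A_N for n ∈ {1,…,N}. Let χ be a positive integer with χ ≤ N/4, let x ∈ {1,…,χ}, and let 𝒲_x = { n ∈ {1,…,N} : n ≡ x (mod χ) }. Then the total popularity of color x satisfies Σ_{n ∈ 𝒲_x} p_n ≥ g/χ, where g = (3^{1−β} − 1)/4^{1−β}. -/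
open Real Finset

/-- The function `t ↦ t ^ (-β)` is antitone on `[1, ∞)` when `β ≥ 0`. -/
lemma stmt5_aux_anti {β : ℝ} (hβ0 : 0 ≤ β) :
    AntitoneOn (fun t : ℝ => t ^ (-β)) (Set.Ici (1 : ℝ)) := by
  intro a ha b hb hab
  exact Real.rpow_le_rpow_of_nonpos (lt_of_lt_of_le one_pos ha) hab (neg_nonpos.mpr hβ0)

/-- Closed form of the relevant integral. -/
lemma stmt5_aux_integral {β : ℝ} (hβ1 : β < 1) (c : ℝ) :
    ∫ t in (1:ℝ)..c, t ^ (-β) = (c ^ (1 - β) - 1) / (1 - β) := by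
  rw [integral_rpow (Or.inl (by linarith))]
  rw [Real.one_rpow]
  ring_nf

/-- Lower bound on the popularity of each color class. -/
theorem stmt_5 (β : ℝ) (hβ : β ∈ Set.Ico (0:ℝ) 1) (N : ℕ) (hN : 1 ≤ N)
    (χ : ℕ) (hχ : 0 < χ) (hχN : (χ : ℝ) ≤ (N : ℝ) / 4)
    (x : ℕ) (hx : x ∈ Finset.Icc 1 χ) :
    ∑ n ∈ (Finset.Icc 1 N).filter (fun n => n % χ = x % χ),
        (n : ℝ) ^ (-β) / (∑ n ∈ Finset.Icc 1 N, (n : ℝ) ^ (-β))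
      ≥ (((3 : ℝ) ^ (1 - β) - 1) / (4 : ℝ) ^ (1 - β)) / χ := by
  obtain ⟨hβ0, hβ1⟩ := hβ
  obtain ⟨hx1, hxχ⟩ := Finset.mem_Icc.mp hx
  set s : ℝ := 1 - β with hs
  have hs0 : (0:ℝ) < s := by simp only [hs]; linarith
  have hs1 : s ≤ 1 := by simp only [hs]; linarith
  have hχR : (0:ℝ) < χ := Nat.cast_pos.mpr hχ
  have hNR : (0:ℝ) < N := Nat.cast_pos.mpr hN
  have hχN' : χ ≤ N := by
    have : (χ : ℝ) ≤ (N : ℝ) := le_trans hχN (by linarith)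
    exact_mod_cast this
  have hxN : x ≤ N := le_trans hxχ hχN'
  set K : ℕ := (N - x) / χ with hK
  -- `N < (K + 2) * χ`
  have hNK : (N : ℝ) ≤ ((K : ℝ) + 2) * χ := by
    have h1 : N - x < (K + 1) * χ := by
      rw [hK, add_mul, one_mul]
      calc N - x = χ * ((N - x) / χ) + (N - x) % χ := (Nat.div_add_mod _ _).symm
        _ < χ * ((N - x) / χ) + χ := by
            exact Nat.add_lt_add_left (Nat.mod_lt _ hχ) _
        _ = (N - x) / χ * χ + χ := by ring
    have h2 : N < (K + 2) * χ := by
      have h1' := Nat.sub_lt_iff_lt_add hxN |>.mp h1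
      calc N < x + (K + 1) * χ := by omega
        _ ≤ χ + (K + 1) * χ := Nat.add_le_add_right hxχ _
        _ = (K + 2) * χ := by ring
    have := (Nat.cast_lt (α := ℝ)).mpr h2
    push_cast at this
    linarith
  -- positivity of terms
  have hterm_pos : ∀ n : ℕ, 1 ≤ n → (0:ℝ) < (n:ℝ) ^ (-β) := fun n hn =>
    Real.rpow_pos_of_pos (by exact_mod_cast hn) _
  -- the denominator A
  set A : ℝ := ∑ n ∈ Finset.Icc 1 N, (n : ℝ) ^ (-β) with hA
  have hApos : 0 < A := by
    apply Finset.sum_pos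
    · intro n hn
      exact hterm_pos n (Finset.mem_Icc.mp hn).1
    · exact ⟨1, Finset.mem_Icc.mpr ⟨le_refl 1, hN⟩⟩
  -- Upper bound on A : A ≤ N ^ s / s
  have hA_upper : A ≤ (N : ℝ) ^ s / s := by
    have hrange : A = ∑ i ∈ Finset.range N, ((1 + i : ℕ) : ℝ) ^ (-β) := by
      rw [hA, show Finset.Icc 1 N = Finset.Ico 1 (N + 1) by rfl,
        Finset.sum_Ico_eq_sum_range]
      simp
    have hsplit : A = 1 + ∑ i ∈ Finset.range (N - 1), ((2 + i : ℕ) : ℝ) ^ (-β) := by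
      rw [hrange]
      rw [show N = (N - 1) + 1 by omega, Finset.sum_range_succ']
      rw [add_comm]
      congr 1
      · simp
      · apply Finset.sum_congr rfl
        intro i _
        congr 1
        push_cast
        ring
    have hint : ∑ i ∈ Finset.range (N - 1), ((2 + i : ℕ) : ℝ) ^ (-β)
        ≤ ∫ t in (1:ℝ)..(1 + (N - 1 : ℕ)), t ^ (-β) := by
      have := AntitoneOn.sum_le_integral (x₀ := (1:ℝ)) (a := N - 1)
        (f := fun t : ℝ => t ^ (-β))
        ((stmt5_aux_anti hβ0).mono (by
          intro t ht
          exact ht.1))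
      refine le_trans (le_of_eq ?_) this
      apply Finset.sum_congr rfl
      intro i _
      push_cast
      ring_nf
    have hcast : (1 : ℝ) + (N - 1 : ℕ) = (N : ℝ) := by
      rw [Nat.cast_sub hN]; push_cast; ring
    rw [hcast] at hint
    rw [stmt5_aux_integral hβ1] at hint
    have h1s : (1:ℝ) ≤ 1 / s := by
      rw [le_div_iff₀ hs0]; linarith
    calc A = 1 + ∑ i ∈ Finset.range (N - 1), ((2 + i : ℕ) : ℝ) ^ (-β) := hsplit
      _ ≤ 1 / s + ((N:ℝ) ^ (1 - β) - 1) / (1 - β) := add_le_add h1s hint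
      _ = (N : ℝ) ^ s / s := by rw [← hs]; field_simp; ring
  -- Lower bound on the numerator P
  set P : ℝ := ∑ n ∈ (Finset.Icc 1 N).filter (fun n => n % χ = x % χ),
      (n : ℝ) ^ (-β) with hP
  -- step 1 : P ≥ ∑_{j < K+1} (x + j χ)^{-β}
  have hstep1 : ∑ j ∈ Finset.range (K + 1), ((x + j * χ : ℕ) : ℝ) ^ (-β) ≤ P := by
    have hinj : ∀ a ∈ Finset.range (K + 1), ∀ b ∈ Finset.range (K + 1),
        x + a * χ = x + b * χ → a = b := by
      intro a _ b _ hab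
      have h' : a * χ = b * χ := by omega
      exact Nat.eq_of_mul_eq_mul_right hχ h'
    have himg : ∑ n ∈ (Finset.range (K + 1)).image (fun j => x + j * χ), (n : ℝ) ^ (-β)
        = ∑ j ∈ Finset.range (K + 1), ((x + j * χ : ℕ) : ℝ) ^ (-β) :=
      Finset.sum_image hinj
    rw [hP, ← himg]
    apply Finset.sum_le_sum_of_subset_of_nonneg
    · intro n hn
      simp only [Finset.mem_image, Finset.mem_range] at hn
      obtain ⟨j, hj, rfl⟩ := hn
      have hjK : j ≤ K := Nat.lt_succ_iff.mp hj
      have hjχ : j * χ ≤ N - x := by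
        calc j * χ ≤ K * χ := Nat.mul_le_mul_right _ hjK
          _ ≤ N - x := by rw [hK]; exact Nat.div_mul_le_self _ _
      simp only [Finset.mem_filter, Finset.mem_Icc]
      refine ⟨⟨by omega, by omega⟩, by simp [Nat.add_mul_mod_self_right]⟩
    · intro n _ _
      positivity
  -- step 2 : each term ≥ ((j+1) χ)^{-β}
  have hstep2 : ∑ j ∈ Finset.range (K + 1), (((j + 1) * χ : ℕ) : ℝ) ^ (-β)
      ≤ ∑ j ∈ Finset.range (K + 1), ((x + j * χ : ℕ) : ℝ) ^ (-β) := by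
    apply Finset.sum_le_sum
    intro j _
    apply stmt5_aux_anti hβ0
    · simp only [Set.mem_Ici]
      have : 1 ≤ x + j * χ := by omega
      exact_mod_cast this
    · simp only [Set.mem_Ici]
      have : 1 ≤ (j + 1) * χ := Nat.mul_pos (Nat.succ_pos j) hχ
      exact_mod_cast this
    · have : x + j * χ ≤ (j + 1) * χ := by
        calc x + j * χ ≤ χ + j * χ := by omega
          _ = (j + 1) * χ := by ring
      exact_mod_cast this
  -- step 3 : factor out χ^{-β} and compare to integral
  have hstep3 : (χ : ℝ) ^ (-β) * (((K : ℝ) + 2) ^ s - 1) / s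
      ≤ ∑ j ∈ Finset.range (K + 1), (((j + 1) * χ : ℕ) : ℝ) ^ (-β) := by
    have hfac : ∑ j ∈ Finset.range (K + 1), (((j + 1) * χ : ℕ) : ℝ) ^ (-β)
        = (χ : ℝ) ^ (-β) * ∑ j ∈ Finset.range (K + 1), ((1 + j : ℕ) : ℝ) ^ (-β) := by
      rw [Finset.mul_sum]
      apply Finset.sum_congr rfl
      intro j _
      have hcast : (((j + 1) * χ : ℕ) : ℝ) = ((1 + j : ℕ) : ℝ) * (χ : ℝ) := by
        push_cast; ring
      rw [hcast, Real.mul_rpow (by positivity) (le_of_lt hχR)]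
      ring
    rw [hfac]
    have hint : ∫ t in (1:ℝ)..(1 + (K + 1 : ℕ)), t ^ (-β)
        ≤ ∑ j ∈ Finset.range (K + 1), ((1 + j : ℕ) : ℝ) ^ (-β) := by
      have := AntitoneOn.integral_le_sum (x₀ := (1:ℝ)) (a := K + 1)
        (f := fun t : ℝ => t ^ (-β))
        ((stmt5_aux_anti hβ0).mono (by intro t ht; exact ht.1))
      refine le_trans this (le_of_eq ?_)
      apply Finset.sum_congr rfl
      intro i _
      push_cast
      ring_nf
    have hcast : (1 : ℝ) + ((K + 1 : ℕ) : ℝ) = (K : ℝ) + 2 := by push_cast; ring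
    rw [hcast, stmt5_aux_integral hβ1, ← hs] at hint
    calc (χ : ℝ) ^ (-β) * (((K : ℝ) + 2) ^ s - 1) / s
        = (χ : ℝ) ^ (-β) * ((((K : ℝ) + 2) ^ s - 1) / s) := by ring
      _ ≤ (χ : ℝ) ^ (-β) * ∑ j ∈ Finset.range (K + 1), ((1 + j : ℕ) : ℝ) ^ (-β) := by
          apply mul_le_mul_of_nonneg_left hint (by positivity)
  -- combine lower bounds
  have hP_lower : (χ : ℝ) ^ (-β) * (((K : ℝ) + 2) ^ s - 1) / s ≤ P :=
    le_trans hstep3 (le_trans hstep2 hstep1)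
  -- the key algebraic inequality
  set g : ℝ := ((3 : ℝ) ^ s - 1) / (4 : ℝ) ^ s with hg
  have h3s : (1:ℝ) ≤ (3:ℝ) ^ s := Real.one_le_rpow (by norm_num) (le_of_lt hs0)
  have h4s : (0:ℝ) < (4:ℝ) ^ s := Real.rpow_pos_of_pos (by norm_num) _
  have hg0 : 0 ≤ g := by
    rw [hg]
    apply div_nonneg (by linarith) (le_of_lt h4s)
  have hkey : g / χ * ((N : ℝ) ^ s / s) ≤ (χ : ℝ) ^ (-β) * (((K : ℝ) + 2) ^ s - 1) / s := by
    have hred : g / χ * (N : ℝ) ^ s ≤ (χ : ℝ) ^ (-β) * (((K : ℝ) + 2) ^ s - 1) := by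
      rw [div_mul_eq_mul_div, div_le_iff₀ hχR]
      -- g * N^s ≤ χ^{-β} ((K+2)^s - 1) * χ
      have hχpow : (χ : ℝ) ^ (-β) * (((K : ℝ) + 2) ^ s - 1) * χ
          = (χ : ℝ) ^ s * (((K : ℝ) + 2) ^ s - 1) := by
        have : (χ : ℝ) ^ s = (χ : ℝ) ^ (-β) * (χ : ℝ) := by
          rw [hs, show (1:ℝ) - β = -β + 1 by ring, Real.rpow_add hχR, Real.rpow_one]
        rw [this]; ring
      rw [hχpow]
      have h1 : (N : ℝ) ^ s ≤ ((χ : ℝ) * ((K : ℝ) + 2)) ^ s :=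
        Real.rpow_le_rpow (le_of_lt hNR) (by nlinarith) (le_of_lt hs0)
      have h2 : ((χ : ℝ) * ((K : ℝ) + 2)) ^ s = (χ : ℝ) ^ s * ((K : ℝ) + 2) ^ s :=
        Real.mul_rpow (le_of_lt hχR) (by positivity)
      have h3 : (χ : ℝ) ^ s ≤ ((N : ℝ) / 4) ^ s :=
        Real.rpow_le_rpow (le_of_lt hχR) hχN (le_of_lt hs0)
      have h4 : ((N : ℝ) / 4) ^ s = (N : ℝ) ^ s / (4 : ℝ) ^ s :=
        Real.div_rpow (le_of_lt hNR) (by norm_num) s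
      have h5 : (3:ℝ) ^ s ≤ (4:ℝ) ^ s :=
        Real.rpow_le_rpow (by norm_num) (by norm_num) (le_of_lt hs0)
      have hNs0 : (0:ℝ) ≤ (N : ℝ) ^ s := by positivity
      -- χ^s ((K+2)^s - 1) = (χ(K+2))^s - χ^s ≥ N^s - N^s/4^s = N^s (4^s-1)/4^s ≥ N^s g
      have hmain : (N : ℝ) ^ s * ((4:ℝ) ^ s - 1) / (4:ℝ) ^ s
          ≤ (χ : ℝ) ^ s * (((K : ℝ) + 2) ^ s - 1) := by
        have e1 : (χ : ℝ) ^ s * (((K : ℝ) + 2) ^ s - 1)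
            = ((χ : ℝ) * ((K : ℝ) + 2)) ^ s - (χ : ℝ) ^ s := by rw [h2]; ring
        rw [e1]
        have e2 : (N : ℝ) ^ s * ((4:ℝ) ^ s - 1) / (4:ℝ) ^ s
            = (N : ℝ) ^ s - (N : ℝ) ^ s / (4:ℝ) ^ s := by field_simp
        rw [e2, ← h4]
        linarith
      calc g * (N : ℝ) ^ s = (N : ℝ) ^ s * ((3:ℝ) ^ s - 1) / (4:ℝ) ^ s := by
            rw [hg]; ring
        _ ≤ (N : ℝ) ^ s * ((4:ℝ) ^ s - 1) / (4:ℝ) ^ s := by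
            gcongr
        _ ≤ (χ : ℝ) ^ s * (((K : ℝ) + 2) ^ s - 1) := hmain
    calc g / χ * ((N : ℝ) ^ s / s) = g / χ * (N : ℝ) ^ s / s := by ring
      _ ≤ (χ : ℝ) ^ (-β) * (((K : ℝ) + 2) ^ s - 1) / s := by gcongr
  -- finish
  have hfinal : g / χ * A ≤ P := by
    calc g / χ * A ≤ g / χ * ((N : ℝ) ^ s / s) := by
          apply mul_le_mul_of_nonneg_left hA_upper (by positivity)
      _ ≤ (χ : ℝ) ^ (-β) * (((K : ℝ) + 2) ^ s - 1) / s := hkey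
      _ ≤ P := hP_lower
  rw [ge_iff_le, ← Finset.sum_div, ← hP, le_div_iff₀ hApos]
  exact hfinal
end

section
/- Let Y be a Poisson random variable with parameter λ > 0, let m ≥ 1 be an integer with m ≥ λ, and define U = [Y − m]⁺. Then E[U] ≤ m · Pr{Y = m}, i.e. Σ_{k=m}^{∞} (k−m)·λ^k e^{−λ}/k! ≤ m · λ^m e^{−λ}/m!. -/
open Real

/-- Bound on the expected excess of a Poisson variable over m ≥ λ. -/
theorem stmt_7 (lam : ℝ) (hlam : 0 < lam) (m : ℕ) (hm : 1 ≤ m) (hml : lam ≤ m) :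
    ∑' k : ℕ, max ((k : ℝ) - m) 0 * lam ^ k * Real.exp (-lam) / (Nat.factorial k)
      ≤ m * (lam ^ m * Real.exp (-lam) / (Nat.factorial m)) := by
  set a : ℕ → ℝ := fun k => lam ^ k * Real.exp (-lam) / (Nat.factorial k) with ha_def
  set f : ℕ → ℝ := fun k => max ((k : ℝ) - m) 0 * lam ^ k * Real.exp (-lam) / (Nat.factorial k)
    with hf_def
  have ha : Summable a := by
    have h := (Real.summable_pow_div_factorial lam).mul_right (Real.exp (-lam))
    exact h.congr fun k => by simp [ha_def]; ring
  have ha_nonneg : ∀ k, 0 ≤ a k := fun k => by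
    have : (0:ℝ) < Nat.factorial k := by positivity
    positivity
  have hstep : ∀ i : ℕ, f (i + (m + 1)) = lam * a (i + m) - (m : ℝ) * a (i + m + 1) := by
    intro i
    have hmax : max (((i + (m+1) : ℕ) : ℝ) - m) 0 = (i : ℝ) + 1 := by
      push_cast; rw [max_eq_left] <;> [ring; linarith]
    have hfac : (Nat.factorial (i + m + 1) : ℝ) = ((i : ℝ) + m + 1) * Nat.factorial (i + m) := by
      rw [Nat.factorial_succ]; push_cast; ring
    have hne : (Nat.factorial (i + m) : ℝ) ≠ 0 := by positivity
    have hne2 : ((i : ℝ) + m + 1) ≠ 0 := by positivity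
    simp only [hf_def, ha_def]
    rw [hmax, show i + (m+1) = i + m + 1 from by ring, hfac]
    field_simp
    ring
  have hfz : ∀ k ∈ Finset.range (m + 1), f k = 0 := by
    intro k hk
    simp only [Finset.mem_range] at hk
    have : ((k:ℝ) - m) ≤ 0 := by
      have : (k:ℝ) ≤ m := by exact_mod_cast Nat.lt_succ_iff.mp hk
      linarith
    simp [hf_def, max_eq_right this]
  have hs1 : Summable (fun i => a (i + m)) := (summable_nat_add_iff m).mpr ha
  have hs2 : Summable (fun i => a (i + m + 1)) := by
    have := (summable_nat_add_iff (m+1)).mpr ha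
    exact this.congr fun i => by rw [show i + (m+1) = i + m + 1 from by ring]
  have hsf' : Summable (fun i => f (i + (m+1))) := by
    refine ((hs1.mul_left lam).sub (hs2.mul_left (m:ℝ))).congr fun i => (hstep i).symm
  have hsf : Summable f := (summable_nat_add_iff (m+1)).mp hsf'
  have hsum : ∑' k, f k = ∑' i, f (i + (m+1)) := by
    rw [← Summable.sum_add_tsum_nat_add (m+1) hsf, Finset.sum_eq_zero hfz, zero_add]
  have htail : ∑' i, a (i + m) = a m + ∑' i, a (i + m + 1) := by
    rw [Summable.tsum_eq_zero_add hs1]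
    simp only [zero_add]
    congr 1
    exact tsum_congr fun i => by rw [show i + 1 + m = i + m + 1 from by ring]
  have hT : 0 ≤ ∑' i, a (i + m + 1) := tsum_nonneg fun i => ha_nonneg _
  have key : ∑' k, f k = lam * a m + (lam - m) * ∑' i, a (i + m + 1) := by
    rw [hsum, tsum_congr hstep, Summable.tsum_sub (hs1.mul_left lam) (hs2.mul_left (m:ℝ)),
      tsum_mul_left, tsum_mul_left, htail]
    ring
  have ham : 0 ≤ a m := ha_nonneg m
  have : ∑' k, f k ≤ lam * a m := by
    rw [key]
    nlinarith [mul_nonneg (sub_nonneg.mpr hml) hT]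
  calc ∑' k, f k ≤ lam * a m := this
    _ ≤ m * a m := by nlinarith
end

section
/- Let X be a Poisson random variable with parameter μ > 0 and let ε ∈ (0, 1). Then Pr{ X ≥ (1+ε)·μ } ≤ exp( −μ · h(1+ε) ), where h(x) = x·log x + 1 − x; that is, Σ_{k : k ≥ (1+ε)μ} μ^k e^{−μ}/k! ≤ e^{−μ·h(1+ε)}. -/
open Real

lemma exp_tsum_aux (x : ℝ) : (∑' n : ℕ, x ^ n / n.factorial) = Real.exp x := by
  rw [Real.exp_eq_exp_ℝ, NormedSpace.exp_eq_tsum_div]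

/-- Chernoff bound for the upper tail of a Poisson random variable. -/
theorem stmt_9 (μ : ℝ) (hμ : 0 < μ) (ε : ℝ) (hε : ε ∈ Set.Ioo (0:ℝ) 1) :
    (∑' k : ℕ, if (1 + ε) * μ ≤ (k : ℝ) then μ ^ k * Real.exp (-μ) / (Nat.factorial k) else 0)
      ≤ Real.exp (-μ * ((1 + ε) * Real.log (1 + ε) + 1 - (1 + ε))) := by
  obtain ⟨hε0, hε1⟩ := hε
  set t := Real.log (1 + ε) with ht
  have h1ε : (0:ℝ) < 1 + ε := by linarith
  have hexpt : Real.exp t = 1 + ε := Real.exp_log h1ε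
  have ht0 : 0 < t := Real.log_pos (by linarith)
  set a := (1 + ε) * μ with ha
  set g : ℕ → ℝ := fun k => Real.exp (t * k - t * a) * (μ ^ k * Real.exp (-μ) / k.factorial)
    with hg
  have hgsum : Summable g := by
    have : g = fun k => (Real.exp (-t * a) * Real.exp (-μ)) * ((μ * Real.exp t) ^ k / k.factorial) := by
      funext k
      simp only [hg]
      rw [mul_pow, ← Real.exp_nat_mul]
      rw [show t * (k:ℝ) - t * a = -t * a + (k:ℝ) * t by ring, Real.exp_add]
      ring
    rw [this]
    exact (Real.summable_pow_div_factorial _).mul_left _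
  have hle : ∀ k : ℕ, (if (1 + ε) * μ ≤ (k : ℝ) then μ ^ k * Real.exp (-μ) / (Nat.factorial k) else 0) ≤ g k := by
    intro k
    have hpos : 0 ≤ μ ^ k * Real.exp (-μ) / k.factorial := by positivity
    by_cases h : (1 + ε) * μ ≤ (k : ℝ)
    · simp only [h, if_true, hg]
      nth_rewrite 1 [show μ ^ k * Real.exp (-μ) / ↑k.factorial = 1 * (μ ^ k * Real.exp (-μ) / ↑k.factorial) by ring]
      apply mul_le_mul_of_nonneg_right _ hpos
      rw [← Real.exp_zero]
      apply Real.exp_le_exp.2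
      have : t * a ≤ t * k := mul_le_mul_of_nonneg_left h ht0.le
      linarith
    · simp only [h, if_false, hg]
      positivity
  have hsum' : Summable (fun k : ℕ => if (1 + ε) * μ ≤ (k : ℝ) then μ ^ k * Real.exp (-μ) / (Nat.factorial k) else 0) := by
    apply Summable.of_nonneg_of_le _ hle hgsum
    intro k
    by_cases h : (1 + ε) * μ ≤ (k : ℝ) <;> simp [h] <;> positivity
  calc (∑' k : ℕ, if (1 + ε) * μ ≤ (k : ℝ) then μ ^ k * Real.exp (-μ) / (Nat.factorial k) else 0)
      ≤ ∑' k, g k := Summable.tsum_le_tsum hle hsum' hgsum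
    _ = Real.exp (-μ * ((1 + ε) * Real.log (1 + ε) + 1 - (1 + ε))) := by
        have : g = fun k => (Real.exp (-t * a) * Real.exp (-μ)) * ((μ * Real.exp t) ^ k / k.factorial) := by
          funext k
          simp only [hg]
          rw [mul_pow, ← Real.exp_nat_mul]
          rw [show t * (k:ℝ) - t * a = -t * a + (k:ℝ) * t by ring, Real.exp_add]
          ring
        rw [this, tsum_mul_left, exp_tsum_aux, ← Real.exp_add, ← Real.exp_add, hexpt]
        congr 1
        rw [ha, ht]
        ring
end

section
/- Let m ≥ 1 be an integer and let 0 < λ₁ ≤ λ₂ ≤ m be real numbers. If Y₁ and Y₂ are Poisson random variables with parameters λ₁ and λ₂ respectively, then Σ_{y=m}^{∞} y · Pr{Y₁ = y} ≤ Σ_{y=m}^{∞} y · Pr{Y₂ = y}, i.e. Σ_{y=m}^{∞} y·λ₁^y e^{−λ₁}/y! ≤ Σ_{y=m}^{∞} y·λ₂^y e^{−λ₂}/y!. -/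
open Real Finset

noncomputable def F (n : ℕ) (x : ℝ) : ℝ := Real.exp (-x) * ∑ k ∈ Finset.range n, x ^ k / (Nat.factorial k)

lemma exp_tsum (x : ℝ) : ∑' k : ℕ, x ^ k / (Nat.factorial k) = Real.exp x := by
  rw [Real.exp_eq_exp_ℝ, NormedSpace.exp_eq_tsum_div]

lemma hasDerivAt_F (n : ℕ) (x : ℝ) :
    HasDerivAt (F (n+1)) (-(Real.exp (-x) * x ^ n / (Nat.factorial n))) x := by
  have hsum : HasDerivAt (fun y : ℝ => ∑ k ∈ Finset.range (n+1), y ^ k / (Nat.factorial k))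
      (∑ k ∈ Finset.range n, x ^ k / (Nat.factorial k)) x := by
    have := HasDerivAt.fun_sum (fun k _ => ((hasDerivAt_pow k x).div_const (Nat.factorial k : ℝ)) :
      ∀ k ∈ Finset.range (n+1), HasDerivAt (fun y : ℝ => y ^ k / (Nat.factorial k))
        ((k : ℝ) * x ^ (k-1) / (Nat.factorial k)) x)
    refine this.congr_deriv ?_
    symm
    rw [Finset.sum_range_succ']
    simp only [Nat.cast_zero, pow_zero, zero_mul, Nat.factorial_zero, Nat.cast_one, zero_div, add_zero]
    apply Finset.sum_congr rfl
    intro k _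
    rw [Nat.factorial_succ, Nat.add_sub_cancel]
    push_cast
    field_simp
  have hexp : HasDerivAt (fun y : ℝ => Real.exp (-y)) (-Real.exp (-x)) x := by
    simpa [Function.comp_def] using (Real.hasDerivAt_exp (-x)).comp x (hasDerivAt_neg x)
  have := hexp.fun_mul hsum
  refine this.congr_deriv ?_
  symm
  rw [Finset.sum_range_succ]
  ring

lemma F_antitone (n : ℕ) : AntitoneOn (F n) (Set.Ici 0) := by
  cases n with
  | zero => intro a _ b _ _; simp [F]
  | succ n =>
    apply antitoneOn_of_deriv_nonpos (convex_Ici 0)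
    · exact fun x _ => ((hasDerivAt_F n x).continuousAt).continuousWithinAt
    · exact fun x _ => (hasDerivAt_F n x).differentiableAt.differentiableWithinAt
    · intro x hx
      rw [interior_Ici] at hx
      have hx' : (0:ℝ) < x := hx
      rw [(hasDerivAt_F n x).deriv]
      have : (0:ℝ) ≤ Real.exp (-x) * x ^ n / (Nat.factorial n) := by
        positivity
      linarith

lemma F_le_one (n : ℕ) (x : ℝ) (hx : 0 ≤ x) : F n x ≤ 1 := by
  have h := Real.sum_le_exp_of_nonneg hx n
  have : F n x ≤ Real.exp (-x) * Real.exp x := by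
    unfold F
    exact mul_le_mul_of_nonneg_left h (Real.exp_nonneg _)
  rwa [← Real.exp_add, neg_add_cancel, Real.exp_zero] at this

lemma tsum_id (n : ℕ) (l : ℝ) :
    (∑' y : ℕ, if n + 1 ≤ y then (y : ℝ) * (l ^ y * Real.exp (-l) / (Nat.factorial y)) else 0)
      = l * (1 - F n l) := by
  set f : ℕ → ℝ := fun y => if n + 1 ≤ y then (y : ℝ) * (l ^ y * Real.exp (-l) / (Nat.factorial y)) else 0 with hf
  have hshift : (fun i : ℕ => f (i + (n+1))) = fun i : ℕ =>
      l * Real.exp (-l) * (l ^ (i + n) / (Nat.factorial (i + n))) := by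
    funext i
    have hle : n + 1 ≤ i + (n + 1) := le_add_self
    have hfac : (Nat.factorial (i + (n+1)) : ℝ) = (i + n + 1 : ℝ) * (Nat.factorial (i + n)) := by
      have : i + (n+1) = (i + n) + 1 := by ring
      rw [this, Nat.factorial_succ]
      push_cast
      ring
    have hpow : l ^ (i + (n+1)) = l ^ (i + n) * l := by
      rw [show i + (n+1) = (i+n) + 1 from by ring, pow_succ]
    have hne : (Nat.factorial (i + n) : ℝ) ≠ 0 := Nat.cast_ne_zero.2 (Nat.factorial_ne_zero _)
    have hne2 : (i + n + 1 : ℝ) ≠ 0 := by positivity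
    simp only [hf, if_pos hle, hfac, hpow]
    push_cast
    field_simp
    ring
  have hs2 : Summable (fun i : ℕ => l ^ (i + n) / (Nat.factorial (i + n))) :=
    (summable_nat_add_iff n).2 (Real.summable_pow_div_factorial l)
  have hsf : Summable f := by
    apply (summable_nat_add_iff (n+1)).1
    rw [hshift]
    exact hs2.mul_left _
  have key := Summable.sum_add_tsum_nat_add (f := f) (n+1) hsf
  have hzero : ∑ i ∈ Finset.range (n+1), f i = 0 := by
    apply Finset.sum_eq_zero
    intro i hi
    rw [Finset.mem_range] at hi
    simp [hf, Nat.not_lt.2 (Nat.lt_succ_iff.1 hi)]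
  have key2 := Summable.sum_add_tsum_nat_add (f := fun k : ℕ => l ^ k / (Nat.factorial k)) n
    (Real.summable_pow_div_factorial l)
  have hexp : ∑' k : ℕ, l ^ k / (Nat.factorial k) = Real.exp l := exp_tsum l
  rw [hexp] at key2
  have htail : ∑' i : ℕ, l ^ (i + n) / (Nat.factorial (i + n))
      = Real.exp l - ∑ k ∈ Finset.range n, l ^ k / (Nat.factorial k) := by linarith
  have : (∑' y : ℕ, f y) = l * Real.exp (-l) *
      (Real.exp l - ∑ k ∈ Finset.range n, l ^ k / (Nat.factorial k)) := by
    rw [← key, hzero, zero_add, hshift, tsum_mul_left, htail]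
  rw [hf] at this
  rw [this]
  have h1 : Real.exp (-l) * Real.exp l = 1 := by rw [← Real.exp_add]; simp
  unfold F
  linear_combination l * h1

/-- Monotonicity in λ of the Poisson tail first moment, for λ ≤ m. -/
theorem stmt_11 (m : ℕ) (hm : 1 ≤ m) (lam₁ lam₂ : ℝ)
    (h1 : 0 < lam₁) (h12 : lam₁ ≤ lam₂) (h2 : lam₂ ≤ m) :
    (∑' y : ℕ, if m ≤ y then (y : ℝ) * (lam₁ ^ y * Real.exp (-lam₁) / (Nat.factorial y)) else 0)
      ≤ ∑' y : ℕ, if m ≤ y then (y : ℝ) * (lam₂ ^ y * Real.exp (-lam₂) / (Nat.factorial y)) else 0 := by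
  obtain ⟨n, rfl⟩ : ∃ n, m = n + 1 := ⟨m - 1, (Nat.succ_pred_eq_of_pos hm).symm⟩
  rw [tsum_id, tsum_id]
  have h1' : (0:ℝ) ≤ lam₁ := h1.le
  have h2' : (0:ℝ) ≤ lam₂ := le_trans h1' h12
  have hF : F n lam₂ ≤ F n lam₁ := F_antitone n h1' h2' h12
  have hF1 : F n lam₁ ≤ 1 := F_le_one n lam₁ h1'
  have hF2 : F n lam₂ ≤ 1 := F_le_one n lam₂ h2'
  nlinarith
end
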